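/- Let $1<p<q<\infty$ and define $D_{p,q,\alpha}=\left(\frac{p-1}{p-1-\alpha}\right)^{\frac{1}{p'}+\frac{1}{q}}\left(\frac{p'}{q}\right)^{\frac{1}{p}}\left(\frac{\frac{q-p}{p}\Gamma\left(\frac{pq}{q-p}\right)}{\Gamma\left(\frac{p}{q-p}\right)\Gamma\left(\frac{p(q-1)}{q-p}\right)}\right)^{\frac{1}{p}-\frac{1}{q}}$, where $p'=p/(p-1)$ and $\alpha<p-1$ is fixed. Then $\lim_{q\to p^+} D_{p,q,\alpha} = \frac{p}{p-1-\alpha}$. -/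

import Mathlib

open Set Filter
open scoped Nat Topology

namespace SharpConstAux

noncomputable def g (z : ℝ) : ℝ := z * Real.log z - z

lemma g_bounds {x y : ℝ} (hx : 0 < x) (hxy : x ≤ y) :
    (y - x) * Real.log x ≤ g y - g x ∧ g y - g x ≤ (y - x) * Real.log y := by
  have hy : 0 < y := lt_of_lt_of_le hx hxy
  have h1 : Real.log (y / x) ≤ y / x - 1 := Real.log_le_sub_one_of_pos (by positivity)
  have h2 : Real.log (x / y) ≤ x / y - 1 := Real.log_le_sub_one_of_pos (by positivity)
  rw [Real.log_div hy.ne' hx.ne'] at h1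
  rw [Real.log_div hx.ne' hy.ne'] at h2
  have h1' : x * (Real.log y - Real.log x) ≤ y - x := by
    have := mul_le_mul_of_nonneg_left h1 hx.le
    have hx' : x * (y / x - 1) = y - x := by field_simp
    linarith
  have h2' : y * (Real.log x - Real.log y) ≤ x - y := by
    have := mul_le_mul_of_nonneg_left h2 hy.le
    have hy' : y * (x / y - 1) = x - y := by field_simp
    linarith
  unfold g
  constructor <;> nlinarith

lemma log_factorial_eq (n : ℕ) (hn : 1 ≤ n) :
    Real.log (n !) = g n + Real.log (Stirling.stirlingSeq n) + 1 / 2 * Real.log (2 * n) := by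
  have h := Stirling.log_stirlingSeq_formula n
  have hn0 : (0 : ℝ) < n := by exact_mod_cast hn
  have he : (n : ℝ) * Real.log ((n : ℝ) / Real.exp 1) = g n := by
    rw [Real.log_div hn0.ne' (Real.exp_pos 1).ne', Real.log_exp]; unfold g; ring
  rw [← he]; unfold g at *; linarith

lemma stirling_log_bounded :
    ∃ C : ℝ, 0 ≤ C ∧ ∀ n : ℕ, 1 ≤ n → |Real.log (Stirling.stirlingSeq n)| ≤ C := by
  obtain ⟨a, ha, hab⟩ := Stirling.stirlingSeq'_bounded_by_pos_constant
  refine ⟨max (-Real.log a) |Real.log (Stirling.stirlingSeq 1)|,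
    le_max_of_le_right (abs_nonneg _), fun n hn => ?_⟩
  obtain ⟨m, rfl⟩ := Nat.exists_eq_add_of_le hn
  rw [abs_le]
  constructor
  · have h1 : a ≤ Stirling.stirlingSeq (1 + m) := by
      have := hab m; rwa [Nat.add_comm m 1] at this
    have := Real.log_le_log ha h1
    have : -Real.log (Stirling.stirlingSeq (1 + m)) ≤ -Real.log a := by linarith
    calc -(max (-Real.log a) |Real.log (Stirling.stirlingSeq 1)|) ≤ -(-Real.log a) := by
          have := le_max_left (-Real.log a) |Real.log (Stirling.stirlingSeq 1)|; linarith
      _ = Real.log a := by ring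
      _ ≤ _ := Real.log_le_log ha h1
  · have h2 : Stirling.stirlingSeq (1 + m) ≤ Stirling.stirlingSeq 1 := by
      have := Stirling.stirlingSeq'_antitone (Nat.zero_le m)
      simpa [Function.comp, Nat.succ_eq_add_one, Nat.add_comm] using this
    have hpos : 0 < Stirling.stirlingSeq (1 + m) := by
      have := Stirling.stirlingSeq'_pos m; rwa [Nat.add_comm m 1] at this
    calc Real.log (Stirling.stirlingSeq (1 + m)) ≤ Real.log (Stirling.stirlingSeq 1) :=
          Real.log_le_log hpos h2
      _ ≤ |Real.log (Stirling.stirlingSeq 1)| := le_abs_self _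
      _ ≤ _ := le_max_right _ _

noncomputable def err (z : ℝ) : ℝ := Real.log (Real.Gamma z) - g z

lemma err_bound : ∃ C : ℝ, 0 ≤ C ∧ ∀ z : ℝ, 2 ≤ z → |err z| ≤ C + 2 * Real.log (2 * z) := by
  obtain ⟨C, hC0, hC⟩ := stirling_log_bounded
  refine ⟨C, hC0, fun z hz => ?_⟩
  have hz0 : (0 : ℝ) < z := by linarith
  set n := ⌊z⌋₊ with hn
  have hn2 : 2 ≤ n := Nat.le_floor (by exact_mod_cast hz)
  have hn2R : (2 : ℝ) ≤ (n : ℝ) := by exact_mod_cast hn2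
  have hnz : (n : ℝ) ≤ z := Nat.floor_le hz0.le
  have hzn : z < (n : ℝ) + 1 := Nat.lt_floor_add_one z
  have hlog2z : 0 ≤ Real.log (2 * z) := Real.log_nonneg (by linarith)
  have hlogz : 0 ≤ Real.log z := Real.log_nonneg (by linarith)
  -- Gamma values at integers
  have hv1 : Real.Gamma ((n : ℝ) + 1) = (n ! : ℝ) := Real.Gamma_nat_eq_factorial n
  have hv2 : Real.Gamma (n : ℝ) = ((n - 1)! : ℝ) := by
    have h : ((n - 1 : ℕ) : ℝ) + 1 = (n : ℝ) := by
      have : 1 ≤ n := by omega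
      push_cast [Nat.cast_sub this]; ring
    rw [← h, Real.Gamma_nat_eq_factorial]
  have hmono := Real.Gamma_strictMonoOn_Ici.monotoneOn
  have hΓlo : Real.Gamma (n : ℝ) ≤ Real.Gamma z :=
    hmono (by simpa using hn2R) (by simpa using hz) hnz
  have hΓhi : Real.Gamma z ≤ Real.Gamma ((n : ℝ) + 1) :=
    hmono (by simpa using hz) (by simp; linarith) hzn.le
  have hΓpos : 0 < Real.Gamma z := Real.Gamma_pos_of_pos hz0
  -- stirling facts
  have hs1 := log_factorial_eq n (by omega)
  have hs2 := log_factorial_eq (n - 1) (by omega)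
  have hσ1 := hC n (by omega)
  have hσ2 := hC (n - 1) (by omega)
  have hcast : ((n - 1 : ℕ) : ℝ) = (n : ℝ) - 1 := by
    have : 1 ≤ n := by omega
    push_cast [Nat.cast_sub this]; ring
  rw [hcast] at hs2
  -- g comparisons
  have hg1 := g_bounds (x := (n : ℝ)) (y := z) (by linarith) hnz
  have hg2 := g_bounds (x := (n : ℝ) - 1) (y := z) (by linarith) (by linarith)
  rw [abs_le]
  constructor
  · -- err z ≥ -(C + 2 log (2z))
    have hlow : Real.log ((n - 1)! : ℝ) ≤ Real.log (Real.Gamma z) := by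
      rw [← hv2]
      exact Real.log_le_log (by rw [hv2]; positivity) hΓlo
    have habs2 : -C ≤ Real.log (Stirling.stirlingSeq (n - 1)) := by
      have := abs_le.mp hσ2; linarith [this.1]
    have hl22 : 0 ≤ Real.log (2 * ((n : ℝ) - 1)) := Real.log_nonneg (by linarith)
    -- g z - g (n-1) ≤ (z - (n-1)) * log z ≤ 2 * log z
    have hgu : g z - g ((n : ℝ) - 1) ≤ 2 * Real.log z := by
      have h := hg2.2
      nlinarith [hlogz]
    have hlz : Real.log z ≤ Real.log (2 * z) := Real.log_le_log hz0 (by linarith)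
    unfold err
    linarith [hs2, hlow, habs2, hl22, hgu, hlz]
  · -- err z ≤ C + 2 log (2z)
    have hhi : Real.log (Real.Gamma z) ≤ Real.log ((n ! : ℝ)) := by
      rw [← hv1]
      exact Real.log_le_log hΓpos hΓhi
    have habs1 : Real.log (Stirling.stirlingSeq n) ≤ C := (abs_le.mp hσ1).2
    have hgl : 0 ≤ g z - g (n : ℝ) := by
      have h := hg1.1
      nlinarith [Real.log_nonneg (by linarith : (1:ℝ) ≤ (n : ℝ))]
    have hl2n : Real.log (2 * (n : ℝ)) ≤ Real.log (2 * z) :=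
      Real.log_le_log (by positivity) (by linarith)
    unfold err
    linarith [hs1, hhi, habs1, hgl, hl2n, hlog2z]

end SharpConstAux
set_option maxHeartbeats 1000000 in
theorem sharp_constant_limit (p α : ℝ) (hp : 1 < p) (hα : α < p - 1) :
    Tendsto (fun q : ℝ =>
        ((p - 1) / (p - 1 - α)) ^ (1 / (p / (p - 1)) + 1 / q) * ((p / (p - 1)) / q) ^ (1 / p) *
          (((q - p) / p * Real.Gamma (p * q / (q - p))) /
              (Real.Gamma (p / (q - p)) * Real.Gamma (p * (q - 1) / (q - p)))) ^ (1 / p - 1 / q))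
      (nhdsWithin p (Ioi p)) (nhds (p / (p - 1 - α))) := by
  obtain ⟨C, hC0, hC⟩ := SharpConstAux.err_bound
  have hp0 : (0 : ℝ) < p := by linarith
  have hp1 : (0 : ℝ) < p - 1 := by linarith
  have hpα : (0 : ℝ) < p - 1 - α := by linarith
  set l : Filter ℝ := nhdsWithin p (Ioi p) with hldef
  have hql : Tendsto (fun q : ℝ => q) l (𝓝 p) := tendsto_id.mono_right nhdsWithin_le_nhds
  have hinv : Tendsto (fun q : ℝ => 1 / q) l (𝓝 (1 / p)) :=
    tendsto_const_nhds.div hql hp0.ne'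
  have hε : Tendsto (fun q : ℝ => 1 / p - 1 / q) l (𝓝 0) := by
    have := (tendsto_const_nhds (x := (1 : ℝ) / p)).sub hinv
    simpa using this
  -- Factor 1
  have hK : (0 : ℝ) < (p - 1) / (p - 1 - α) := by positivity
  have h1 : Tendsto (fun q : ℝ => ((p - 1) / (p - 1 - α)) ^ (1 / (p / (p - 1)) + 1 / q)) l
      (𝓝 ((p - 1) / (p - 1 - α))) := by
    have h := (tendsto_const_nhds (x := (p - 1) / (p - 1 - α))).rpow
      ((tendsto_const_nhds (x := 1 / (p / (p - 1)))).add hinv) (Or.inl hK.ne')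
    have he : 1 / (p / (p - 1)) + 1 / p = 1 := by field_simp; ring
    rwa [he, Real.rpow_one] at h
  -- Factor 2
  have h2 : Tendsto (fun q : ℝ => ((p / (p - 1)) / q) ^ (1 / p)) l
      (𝓝 (((p / (p - 1)) / p) ^ ((1 : ℝ) / p))) :=
    (tendsto_const_nhds.div hql hp0.ne').rpow_const (Or.inr (by positivity))
  -- Setup for factor 3
  set δ : ℝ := min (p / 2) (p * (p - 1) / 2) with hδdef
  have hδ0 : 0 < δ := lt_min (by positivity) (by positivity)
  have hev : ∀ᶠ q in l, q ∈ Ioo p (p + δ) :=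
    Ioo_mem_nhdsGT (by linarith)
  have hmain : Tendsto (fun q : ℝ => Real.log q / q + ((q - 1) / q) * Real.log (q / (q - 1))) l
      (𝓝 (Real.log p / p + ((p - 1) / p) * Real.log (p / (p - 1)))) := by
    have c1 : ContinuousAt (fun q : ℝ => Real.log q / q + ((q - 1) / q) * Real.log (q / (q - 1))) p := by
      have hq : ContinuousAt (fun q : ℝ => q) p := continuousAt_id
      have hq1 : ContinuousAt (fun q : ℝ => q - 1) p := hq.sub continuousAt_const
      have hdiv : ContinuousAt (fun q : ℝ => q / (q - 1)) p :=
        hq.div hq1 (sub_ne_zero.mpr hp.ne')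
      exact ((Real.continuousAt_log hp0.ne').div hq hp0.ne').add
        ((hq1.div hq hp0.ne').mul (hdiv.log (div_pos hp0 hp1).ne'))
    exact c1.tendsto.mono_left nhdsWithin_le_nhds
  have hsub : Tendsto (fun q : ℝ => q - p) l (𝓝[>] (0 : ℝ)) := by
    rw [tendsto_nhdsWithin_iff]
    constructor
    · simpa using hql.sub (tendsto_const_nhds (x := p))
    · exact eventually_mem_nhdsWithin.mono fun q hq => mem_Ioi.mpr (sub_pos.mpr hq)
  have hxlog : Tendsto (fun q : ℝ => (q - p) * Real.log (q - p)) l (𝓝 0) := by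
    have h := (tendsto_log_mul_rpow_nhdsGT_zero one_pos).comp hsub
    simp only [Function.comp_def, Real.rpow_one] at h
    exact h.congr fun q => mul_comm _ _
  have hcpq : Tendsto (fun q : ℝ => 1 / (p * q)) l (𝓝 (1 / (p * p))) :=
    tendsto_const_nhds.div (tendsto_const_nhds.mul hql) (by positivity)
  have hr2 : Tendsto (fun q : ℝ => (1 / p - 1 / q) * Real.log ((q - p) / p)) l (𝓝 0) := by
    have h : Tendsto (fun q : ℝ =>
        1 / (p * q) * ((q - p) * Real.log (q - p)) - (1 / p - 1 / q) * Real.log p) l (𝓝 0) := by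
      have := (hcpq.mul hxlog).sub (hε.mul (tendsto_const_nhds (x := Real.log p)))
      simpa using this
    apply Filter.Tendsto.congr' _ h
    filter_upwards [self_mem_nhdsWithin] with q hq
    have hq0 : (0 : ℝ) < q := lt_trans hp0 hq
    have hs0 : (0 : ℝ) < q - p := sub_pos.mpr hq
    rw [Real.log_div hs0.ne' hp0.ne']
    field_simp
  have hB2 : Tendsto (fun q : ℝ => (1 / p - 1 / q) * Real.log (q - p)) l (𝓝 0) := by
    have h : Tendsto (fun q : ℝ => 1 / (p * q) * ((q - p) * Real.log (q - p))) l (𝓝 0) := by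
      simpa using hcpq.mul hxlog
    apply Filter.Tendsto.congr' _ h
    filter_upwards [self_mem_nhdsWithin] with q hq
    have hq0 : (0 : ℝ) < q := lt_trans hp0 hq
    field_simp
  have hlogc : Tendsto (fun q : ℝ => Real.log (2 * p * q)) l (𝓝 (Real.log (2 * p * p))) := by
    have c1 : ContinuousAt (fun q : ℝ => Real.log (2 * p * q)) p :=
      ((continuousAt_const.mul continuousAt_id).log (mul_pos (by positivity) hp0).ne')
    exact c1.tendsto.mono_left nhdsWithin_le_nhds
  have hB3 : Tendsto (fun q : ℝ =>
      (1 / p - 1 / q) * (Real.log (2 * p * q) - Real.log (q - p))) l (𝓝 0) := by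
    have h := (hε.mul hlogc).sub hB2
    rw [zero_mul, sub_zero] at h
    exact h.congr fun q => (mul_sub _ _ _).symm
  have hBnd : Tendsto (fun q : ℝ => (1 / p - 1 / q) * (3 * C) +
      6 * ((1 / p - 1 / q) * (Real.log (2 * p * q) - Real.log (q - p)))) l (𝓝 0) := by
    have h := (hε.mul (tendsto_const_nhds (x := 3 * C))).add
      ((tendsto_const_nhds (x := (6 : ℝ))).mul hB3)
    simpa using h
  -- the error part tends to 0
  have he3 : Tendsto (fun q : ℝ => (1 / p - 1 / q) *
      (SharpConstAux.err (p * q / (q - p)) - SharpConstAux.err (p / (q - p)) -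
        SharpConstAux.err (p * (q - 1) / (q - p)))) l (𝓝 0) := by
    apply squeeze_zero_norm' _ hBnd
    filter_upwards [hev] with q hq
    obtain ⟨hq1, hq2⟩ := hq
    have hs0 : (0 : ℝ) < q - p := sub_pos.mpr hq1
    have hq0 : (0 : ℝ) < q := lt_trans hp0 hq1
    have hsp : q - p ≤ p / 2 := by
      have := min_le_left (p / 2) (p * (p - 1) / 2); linarith
    have hsp2 : q - p ≤ p * (p - 1) / 2 := by
      have := min_le_right (p / 2) (p * (p - 1) / 2); linarith
    have hb2 : (2 : ℝ) ≤ p / (q - p) := by rw [le_div_iff₀ hs0]; linarith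
    have hc2 : (2 : ℝ) ≤ p * (q - 1) / (q - p) := by
      rw [le_div_iff₀ hs0]; nlinarith
    have ha2 : (2 : ℝ) ≤ p * q / (q - p) := by
      rw [le_div_iff₀ hs0]; nlinarith
    have hεq : 0 < 1 / p - 1 / q := by
      rw [sub_pos]; exact one_div_lt_one_div_of_lt hp0 hq1
    have hba : p / (q - p) ≤ p * q / (q - p) := by
      apply div_le_div_of_nonneg_right ?_ hs0.le
      nlinarith
    have hca : p * (q - 1) / (q - p) ≤ p * q / (q - p) := by
      apply div_le_div_of_nonneg_right ?_ hs0.le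
      nlinarith
    have hla : Real.log (2 * (p / (q - p))) ≤ Real.log (2 * (p * q / (q - p))) :=
      Real.log_le_log (by positivity) (by linarith)
    have hlc : Real.log (2 * (p * (q - 1) / (q - p))) ≤ Real.log (2 * (p * q / (q - p))) :=
      Real.log_le_log (by positivity) (by linarith)
    have hEa := abs_le.mp (hC _ ha2)
    have hEb := abs_le.mp (hC _ hb2)
    have hEc := abs_le.mp (hC _ hc2)
    have hD : |SharpConstAux.err (p * q / (q - p)) - SharpConstAux.err (p / (q - p)) -
        SharpConstAux.err (p * (q - 1) / (q - p))| ≤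
        3 * C + 6 * Real.log (2 * (p * q / (q - p))) := by
      refine abs_le.mpr ⟨by linarith [hEa.1, hEb.2, hEc.2, hla, hlc],
        by linarith [hEa.2, hEb.1, hEc.1, hla, hlc]⟩
    have hlogeq : Real.log (2 * (p * q / (q - p))) = Real.log (2 * p * q) - Real.log (q - p) := by
      rw [show 2 * (p * q / (q - p)) = (2 * p * q) / (q - p) by ring,
        Real.log_div (by positivity) hs0.ne']
    rw [Real.norm_eq_abs, abs_mul, abs_of_pos hεq]
    calc (1 / p - 1 / q) * |SharpConstAux.err (p * q / (q - p)) - SharpConstAux.err (p / (q - p)) -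
          SharpConstAux.err (p * (q - 1) / (q - p))|
        ≤ (1 / p - 1 / q) * (3 * C + 6 * Real.log (2 * (p * q / (q - p)))) :=
          mul_le_mul_of_nonneg_left hD hεq.le
      _ = (1 / p - 1 / q) * (3 * C) +
          6 * ((1 / p - 1 / q) * (Real.log (2 * p * q) - Real.log (q - p))) := by
          rw [hlogeq]; ring
  -- combine for the exponent of factor 3
  have hG : Tendsto (fun q : ℝ =>
      (Real.log q / q + ((q - 1) / q) * Real.log (q / (q - 1))) +
        (1 / p - 1 / q) * Real.log ((q - p) / p) +
        (1 / p - 1 / q) * (SharpConstAux.err (p * q / (q - p)) - SharpConstAux.err (p / (q - p)) -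
          SharpConstAux.err (p * (q - 1) / (q - p)))) l
      (𝓝 (Real.log p / p + ((p - 1) / p) * Real.log (p / (p - 1)))) := by
    have h := (hmain.add hr2).add he3
    simpa using h
  have h3 : Tendsto (fun q : ℝ =>
      (((q - p) / p * Real.Gamma (p * q / (q - p))) /
        (Real.Gamma (p / (q - p)) * Real.Gamma (p * (q - 1) / (q - p)))) ^ (1 / p - 1 / q)) l
      (𝓝 (Real.exp (Real.log p / p + ((p - 1) / p) * Real.log (p / (p - 1))))) := by
    have hexp := Real.continuous_exp.continuousAt.tendsto.comp hG
    apply Filter.Tendsto.congr' _ hexp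
    filter_upwards [hev] with q hq
    obtain ⟨hq1, hq2⟩ := hq
    have hs0 : (0 : ℝ) < q - p := sub_pos.mpr hq1
    have hq0 : (0 : ℝ) < q := lt_trans hp0 hq1
    have hq1' : (0 : ℝ) < q - 1 := by linarith
    have hΓa : 0 < Real.Gamma (p * q / (q - p)) := Real.Gamma_pos_of_pos (by positivity)
    have hΓb : 0 < Real.Gamma (p / (q - p)) := Real.Gamma_pos_of_pos (by positivity)
    have hΓc : 0 < Real.Gamma (p * (q - 1) / (q - p)) := Real.Gamma_pos_of_pos (by positivity)
    have hR : 0 < ((q - p) / p * Real.Gamma (p * q / (q - p))) /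
        (Real.Gamma (p / (q - p)) * Real.Gamma (p * (q - 1) / (q - p))) := by positivity
    simp only [Function.comp_apply]
    rw [Real.rpow_def_of_pos hR]
    congr 1
    rw [Real.log_div (mul_pos (div_pos hs0 hp0) hΓa).ne' (mul_pos hΓb hΓc).ne',
      Real.log_mul (div_pos hs0 hp0).ne' hΓa.ne', Real.log_mul hΓb.ne' hΓc.ne']
    have ea : Real.log (Real.Gamma (p * q / (q - p))) = SharpConstAux.err (p * q / (q - p)) +
        ((p * q / (q - p)) * Real.log (p * q / (q - p)) - p * q / (q - p)) := by
      unfold SharpConstAux.err SharpConstAux.g; ring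
    have eb : Real.log (Real.Gamma (p / (q - p))) = SharpConstAux.err (p / (q - p)) +
        ((p / (q - p)) * Real.log (p / (q - p)) - p / (q - p)) := by
      unfold SharpConstAux.err SharpConstAux.g; ring
    have ec : Real.log (Real.Gamma (p * (q - 1) / (q - p))) = SharpConstAux.err (p * (q - 1) / (q - p)) +
        ((p * (q - 1) / (q - p)) * Real.log (p * (q - 1) / (q - p)) - p * (q - 1) / (q - p)) := by
      unfold SharpConstAux.err SharpConstAux.g; ring
    rw [ea, eb, ec]
    have hLa : Real.log (p * q / (q - p)) = Real.log p + Real.log q - Real.log (q - p) := by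
      rw [Real.log_div (by positivity) hs0.ne', Real.log_mul hp0.ne' hq0.ne']
    have hLb : Real.log (p / (q - p)) = Real.log p - Real.log (q - p) :=
      Real.log_div hp0.ne' hs0.ne'
    have hLc : Real.log (p * (q - 1) / (q - p)) = Real.log p + Real.log (q - 1) - Real.log (q - p) := by
      rw [Real.log_div (by positivity) hs0.ne', Real.log_mul hp0.ne' hq1'.ne']
    have hLr : Real.log (q / (q - 1)) = Real.log q - Real.log (q - 1) :=
      Real.log_div hq0.ne' hq1'.ne'
    have hLs : Real.log ((q - p) / p) = Real.log (q - p) - Real.log p :=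
      Real.log_div hs0.ne' hp0.ne'
    rw [hLa, hLb, hLc, hLr, hLs]
    generalize SharpConstAux.err (p * q / (q - p)) = Ea
    generalize SharpConstAux.err (p / (q - p)) = Eb
    generalize SharpConstAux.err (p * (q - 1) / (q - p)) = Ec
    generalize Real.log p = Lp
    generalize Real.log q = Lq
    generalize Real.log (q - 1) = L1
    generalize Real.log (q - p) = Ls
    field_simp
    ring
  -- final combination
  have hfinal := (h1.mul h2).mul h3
  have hval : (p - 1) / (p - 1 - α) * ((p / (p - 1)) / p) ^ ((1 : ℝ) / p) *
      Real.exp (Real.log p / p + ((p - 1) / p) * Real.log (p / (p - 1))) = p / (p - 1 - α) := by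
    have h4 : ((p / (p - 1)) / p : ℝ) = (p - 1)⁻¹ := by
      rw [div_div, mul_comm, ← div_div, div_self hp0.ne', one_div]
    rw [h4, Real.rpow_def_of_pos (by positivity), mul_assoc, ← Real.exp_add]
    have h5 : Real.log (p - 1)⁻¹ * (1 / p) +
        (Real.log p / p + ((p - 1) / p) * Real.log (p / (p - 1))) = Real.log (p / (p - 1)) := by
      rw [Real.log_inv, Real.log_div hp0.ne' hp1.ne']
      field_simp
      ring
    rw [h5, Real.exp_log (by positivity)]
    rw [div_mul_div_comm, mul_comm (p - 1 - α) (p - 1)]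
    exact mul_div_mul_left _ _ hp1.ne'
  rw [← hval]
  exact hfinal
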